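/- A symmetric real tensor A of order m and dimension n is strictly semi-positive if and only if it is strictly copositive. -/

import Mathlib

open Finset

/-- `(A x^{m-1})_i`: contraction of an order-`(m+1)` tensor with `m` copies of `x`. -/
def tcontr {m : ℕ} {ι : Type*} [Fintype ι] [DecidableEq ι]
    (A : (Fin (m + 1) → ι) → ℝ) (x : ι → ℝ) (i : ι) : ℝ :=
  ∑ g : Fin m → ι, A (Fin.cons i g) * ∏ t, x (g t)

/-- `A x^{m}` : the homogeneous form of an order-`(m+1)` tensor. -/
def tform {m : ℕ} {ι : Type*} [Fintype ι] [DecidableEq ι]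
    (A : (Fin (m + 1) → ι) → ℝ) (x : ι → ℝ) : ℝ :=
  ∑ f : Fin (m + 1) → ι, A f * ∏ t, x (f t)

def SemiPos {m : ℕ} {ι : Type*} [Fintype ι] [DecidableEq ι]
    (A : (Fin (m + 1) → ι) → ℝ) : Prop :=
  ∀ x : ι → ℝ, 0 ≤ x → x ≠ 0 → ∃ k, 0 < x k ∧ 0 ≤ tcontr A x k

def StrictSemiPos {m : ℕ} {ι : Type*} [Fintype ι] [DecidableEq ι]
    (A : (Fin (m + 1) → ι) → ℝ) : Prop :=
  ∀ x : ι → ℝ, 0 ≤ x → x ≠ 0 → ∃ k, 0 < x k ∧ 0 < tcontr A x k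

def Copos {m : ℕ} {ι : Type*} [Fintype ι] [DecidableEq ι]
    (A : (Fin (m + 1) → ι) → ℝ) : Prop :=
  ∀ x : ι → ℝ, 0 ≤ x → 0 ≤ tform A x

def StrictCopos {m : ℕ} {ι : Type*} [Fintype ι] [DecidableEq ι]
    (A : (Fin (m + 1) → ι) → ℝ) : Prop :=
  ∀ x : ι → ℝ, 0 ≤ x → x ≠ 0 → 0 < tform A x

/-- Symmetric tensor: entries invariant under any permutation of indices. -/
def SymT {m : ℕ} {ι : Type*} (A : (Fin (m + 1) → ι) → ℝ) : Prop :=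
  ∀ (f : Fin (m + 1) → ι) (σ : Equiv.Perm (Fin (m + 1))), A (f ∘ σ) = A f

/-- `x` solves the tensor complementarity problem TCP(q, A). -/
def TCPsol {m n : ℕ} (A : (Fin (m + 1) → Fin n) → ℝ) (q x : Fin n → ℝ) : Prop :=
  0 ≤ x ∧ (∀ i, 0 ≤ q i + tcontr A x i) ∧ (∑ i, x i * (q i + tcontr A x i)) = 0

/-- The principal sub-tensor of `A` with all indices in `N`. -/
def subT {m n : ℕ} (A : (Fin (m + 1) → Fin n) → ℝ) (N : Finset (Fin n)) :
    (Fin (m + 1) → {i // i ∈ N}) → ℝ :=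
  fun f => A fun t => (f t : Fin n)

lemma sum_cons_decomp {m : ℕ} {ι : Type*} [Fintype ι] [DecidableEq ι]
    (F : (Fin (m+1) → ι) → ℝ) :
    ∑ f, F f = ∑ i, ∑ g : Fin m → ι, F (Fin.cons i g) := by
  rw [← Fintype.sum_prod_type']
  exact (Fintype.sum_equiv (Fin.consEquiv fun _ => ι) _ _ (fun p => rfl)).symm

lemma erase_zero_prod {m : ℕ} (h : Fin (m+1) → ℝ) :
    ∏ r ∈ (univ : Finset (Fin (m+1))).erase 0, h r = ∏ t : Fin m, h t.succ := by
  have : (univ : Finset (Fin (m+1))).erase 0 = Finset.image Fin.succ univ := by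
    ext r
    simp [Fin.exists_succ_eq, eq_comm]
  rw [this, Finset.prod_image (fun a _ b _ hab => Fin.succ_injective _ hab)]

/-- Euler identity: `A x^m = ∑ i, x i (A x^{m-1})_i`. -/
lemma euler {m : ℕ} {ι : Type*} [Fintype ι] [DecidableEq ι]
    (A : (Fin (m + 1) → ι) → ℝ) (x : ι → ℝ) :
    tform A x = ∑ i, x i * tcontr A x i := by
  rw [tform, sum_cons_decomp]
  refine Finset.sum_congr rfl fun i _ => ?_
  rw [tcontr, Finset.mul_sum]
  refine Finset.sum_congr rfl fun g _ => ?_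
  rw [Fin.prod_univ_succ]
  simp only [Fin.cons_zero, Fin.cons_succ]
  ring

lemma sym_slice {m : ℕ} {ι : Type*} [Fintype ι] [DecidableEq ι]
    (A : (Fin (m + 1) → ι) → ℝ) (hA : SymT A) (y v : ι → ℝ) (s : Fin (m+1)) :
    ∑ f, A f * ((∏ r ∈ univ.erase s, y (f r)) * v (f s))
      = ∑ i, v i * tcontr A y i := by
  have hswap : ∀ F : (Fin (m+1) → ι) → ℝ, ∑ f, F f = ∑ f, F (f ∘ Equiv.swap s 0) := by
    intro F
    exact Fintype.sum_equiv (Equiv.arrowCongr (Equiv.swap s 0).symm (Equiv.refl ι)) _ _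
      (fun f => by
        congr 1
        funext r
        simp [Equiv.arrowCongr, Equiv.swap_apply_self])
  rw [hswap]
  have key : ∀ f : Fin (m+1) → ι,
      A (f ∘ Equiv.swap s 0) * ((∏ r ∈ univ.erase s, y ((f ∘ Equiv.swap s 0) r))
        * v ((f ∘ Equiv.swap s 0) s))
      = A f * ((∏ r ∈ univ.erase 0, y (f r)) * v (f 0)) := by
    intro f
    rw [hA f (Equiv.swap s 0)]
    have h1 : (f ∘ Equiv.swap s 0) s = f 0 := by simp
    have h2 : ∏ r ∈ univ.erase s, y ((f ∘ Equiv.swap s 0) r)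
        = ∏ r ∈ univ.erase 0, y (f r) := by
      refine Finset.prod_equiv (Equiv.swap s 0) (fun r => ?_) (fun r _ => rfl)
      simp only [Finset.mem_erase, Finset.mem_univ, and_true]
      constructor
      · intro hr hc
        refine hr ?_
        have := (Equiv.swap s 0).injective (hc.trans (Equiv.swap_apply_left s 0).symm)
        simpa using this
      · intro hr hc
        exact hr (by rw [hc, Equiv.swap_apply_left])
    rw [h1, h2]
  simp only [key]
  rw [sum_cons_decomp]
  refine Finset.sum_congr rfl fun i _ => ?_
  rw [tcontr, Finset.mul_sum]
  refine Finset.sum_congr rfl fun g _ => ?_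
  rw [erase_zero_prod]
  simp only [Fin.cons_zero, Fin.cons_succ]
  ring

lemma tform_hasDerivAt {m : ℕ} {ι : Type*} [Fintype ι] [DecidableEq ι]
    (A : (Fin (m + 1) → ι) → ℝ) (y v : ι → ℝ) :
    HasDerivAt (fun t : ℝ => tform A (fun i => y i + t * v i))
      (∑ f, A f * ∑ s, (∏ r ∈ univ.erase s, y (f r)) * v (f s)) 0 := by
  have hfun : (fun t : ℝ => tform A (fun i => y i + t * v i))
      = fun t : ℝ => ∑ f : Fin (m+1) → ι, A f * ∏ s, (y (f s) + t * v (f s)) := by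
    funext t; rfl
  rw [hfun]
  refine HasDerivAt.fun_sum fun f _ => ?_
  have hp : HasDerivAt (fun t : ℝ => ∏ s, (y (f s) + t * v (f s)))
      (∑ s, (∏ r ∈ univ.erase s, (y (f r) + (0:ℝ) * v (f r))) • v (f s)) 0 := by
    refine HasDerivAt.fun_finsetProd fun s _ => ?_
    exact (hasDerivAt_mul_const (v (f s))).const_add (y (f s))
  have := hp.const_mul (A f)
  convert this using 1
  · rfl
  simp [smul_eq_mul]

lemma tform_homog {m : ℕ} {ι : Type*} [Fintype ι] [DecidableEq ι]
    (A : (Fin (m + 1) → ι) → ℝ) (x : ι → ℝ) (c : ℝ) :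
    tform A (fun i => c * x i) = c ^ (m + 1) * tform A x := by
  rw [tform, tform, Finset.mul_sum]
  refine Finset.sum_congr rfl fun f _ => ?_
  rw [Finset.prod_mul_distrib, Finset.prod_const, card_univ, Fintype.card_fin]
  ring

lemma tform_continuous {m : ℕ} {ι : Type*} [Fintype ι] [DecidableEq ι]
    (A : (Fin (m + 1) → ι) → ℝ) : Continuous (tform A) := by
  have : tform A = fun x : ι → ℝ => ∑ f : Fin (m+1) → ι, A f * ∏ t, x (f t) := rfl
  rw [this]
  exact continuous_finset_sum _ fun f _ =>
    continuous_const.mul (continuous_finset_prod _ fun t _ => continuous_apply (f t))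

theorem stmt_14 {m n : ℕ} (A : (Fin (m + 1) → Fin n) → ℝ) (hA : SymT A) :
    StrictSemiPos A ↔ StrictCopos A := by
  constructor
  · -- hard direction
    intro hS x hx hx0
    by_contra hle
    push_neg at hle
    -- set up the simplex
    set Δ : Set (Fin n → ℝ) := {z | (∀ i, 0 ≤ z i) ∧ ∑ i, z i = 1} with hΔdef
    obtain ⟨j, hj⟩ := Function.ne_iff.mp hx0
    have hxj : 0 < x j := lt_of_le_of_ne (hx j) (by simpa [eq_comm] using hj)
    have hs : 0 < ∑ i, x i := Finset.sum_pos' (fun i _ => hx i) ⟨j, mem_univ j, hxj⟩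
    have hz₀ : (fun i => (∑ i, x i)⁻¹ * x i) ∈ Δ := by
      refine ⟨fun i => mul_nonneg (inv_nonneg.mpr hs.le) (hx i), ?_⟩
      rw [← Finset.mul_sum, inv_mul_cancel₀ hs.ne']
    have hclosed : IsClosed Δ := by
      have : Δ = (⋂ i, {z : Fin n → ℝ | 0 ≤ z i}) ∩ {z | ∑ i, z i = 1} := by
        ext z; simp [hΔdef, Set.mem_iInter]
      rw [this]
      exact IsClosed.inter
        (isClosed_iInter fun i => isClosed_le continuous_const (continuous_apply i))
        (isClosed_eq (continuous_finset_sum _ fun i _ => continuous_apply i) continuous_const)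
    have hbdd : Bornology.IsBounded Δ := by
      rw [isBounded_iff_forall_norm_le]
      refine ⟨1, fun z hz => ?_⟩
      rw [pi_norm_le_iff_of_nonneg zero_le_one]
      intro i
      rw [Real.norm_eq_abs, abs_of_nonneg (hz.1 i)]
      calc z i ≤ ∑ i, z i := Finset.single_le_sum (fun i _ => hz.1 i) (mem_univ i)
        _ = 1 := hz.2
    have hΔc : IsCompact Δ := Metric.isCompact_of_isClosed_isBounded hclosed hbdd
    obtain ⟨y, hyΔ, hymin⟩ := hΔc.exists_isMinOn ⟨_, hz₀⟩ (tform_continuous A).continuousOn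
    have hymin' : ∀ z ∈ Δ, tform A y ≤ tform A z := fun z hz => hymin hz
    have hy0 : tform A y ≤ 0 := by
      calc tform A y ≤ tform A (fun i => (∑ i, x i)⁻¹ * x i) := hymin' _ hz₀
        _ = ((∑ i, x i)⁻¹) ^ (m + 1) * tform A x := tform_homog A x _
        _ ≤ 0 := mul_nonpos_of_nonneg_of_nonpos (pow_nonneg (inv_nonneg.mpr hs.le) _) hle
    have hyne : y ≠ 0 := by
      intro h
      have := hyΔ.2
      rw [h] at this
      simp at this
    obtain ⟨k, hyk, hck⟩ := hS y (fun i => hyΔ.1 i) hyne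
    -- the contradiction: tcontr A y k ≤ 0
    set v : Fin n → ℝ := fun i => (if i = k then 1 else 0) - y i with hvdef
    set φ : ℝ → ℝ := fun t => tform A (fun i => y i + t * v i) with hφdef
    have hyk1 : y k ≤ 1 := by
      rw [← hyΔ.2]
      exact Finset.single_le_sum (fun i _ => hyΔ.1 i) (mem_univ k)
    have hδ : (0:ℝ) < y k / 2 := by linarith
    have hmem : ∀ t : ℝ, |t| < y k / 2 → (fun i => y i + t * v i) ∈ Δ := by
      intro t ht
      rw [abs_lt] at ht
      constructor
      · intro i
        show 0 ≤ y i + t * v i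
        have hvi : v i = (if i = k then 1 else 0) - y i := rfl
        have h1 : 0 ≤ y i := hyΔ.1 i
        by_cases hik : i = k
        · subst hik
          rw [hvi, if_pos rfl]
          rcases le_or_gt 0 t with h | h
          · nlinarith
          · nlinarith
        · rw [hvi, if_neg hik]
          nlinarith
      · have hsv : ∑ i, v i = 0 := by
          simp only [hvdef]
          rw [Finset.sum_sub_distrib, hyΔ.2, Finset.sum_ite_eq' univ k (fun _ => (1:ℝ))]
          simp
        rw [show (∑ i, (y i + t * v i)) = ∑ i, y i + t * ∑ i, v i by
          rw [Finset.sum_add_distrib, Finset.mul_sum], hyΔ.2, hsv]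
        ring
    have hlm : IsLocalMin φ 0 := by
      have hy0' : (fun i => y i + (0:ℝ) * v i) = y := by funext i; ring
      filter_upwards [Metric.ball_mem_nhds (0:ℝ) hδ] with t ht
      have htm : (fun i => y i + t * v i) ∈ Δ := by
        apply hmem
        simpa [Real.dist_eq] using ht
      show φ 0 ≤ φ t
      simp only [hφdef, hy0']
      exact hymin' _ htm
    have hd := tform_hasDerivAt A y v
    have hD0 : (∑ f, A f * ∑ s, (∏ r ∈ univ.erase s, y (f r)) * v (f s)) = 0 := by
      rw [← hd.deriv]
      exact hlm.deriv_eq_zero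
    have hDval : (∑ f, A f * ∑ s, (∏ r ∈ univ.erase s, y (f r)) * v (f s))
        = (m + 1 : ℝ) * ∑ i, v i * tcontr A y i := by
      have h1 : ∀ f : Fin (m+1) → Fin n,
          A f * ∑ s, (∏ r ∈ univ.erase s, y (f r)) * v (f s)
          = ∑ s, A f * ((∏ r ∈ univ.erase s, y (f r)) * v (f s)) := fun f =>
        Finset.mul_sum _ _ _
      simp only [h1]
      rw [Finset.sum_comm]
      have h2 : ∀ s : Fin (m+1), s ∈ univ →
          (∑ f : Fin (m+1) → Fin n, A f * ((∏ r ∈ univ.erase s, y (f r)) * v (f s)))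
          = ∑ i, v i * tcontr A y i := fun s _ => sym_slice A hA y v s
      rw [Finset.sum_congr rfl h2, Finset.sum_const, card_univ, Fintype.card_fin,
        nsmul_eq_mul]
      push_cast
      ring
    have hsum0 : ∑ i, v i * tcontr A y i = 0 := by
      have := hDval ▸ hD0
      have hm1 : (m + 1 : ℝ) ≠ 0 := by positivity
      exact (mul_eq_zero.mp this).resolve_left hm1
    have hvt : ∑ i, v i * tcontr A y i = tcontr A y k - tform A y := by
      have hterm : ∀ i : Fin n, v i * tcontr A y i
          = (if i = k then tcontr A y i else 0) - y i * tcontr A y i := by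
        intro i
        have hvi : v i = (if i = k then 1 else 0) - y i := rfl
        rw [hvi]
        by_cases h : i = k
        · rw [if_pos h, if_pos h]; ring
        · rw [if_neg h, if_neg h]; ring
      simp only [hterm]
      rw [Finset.sum_sub_distrib, Finset.sum_ite_eq' univ k (fun i => tcontr A y i),
        euler A y]
      simp
    have : tcontr A y k = tform A y := by
      have := hvt ▸ hsum0
      linarith
    linarith
  · -- easy direction
    intro hC x hx hx0
    have h := hC x hx hx0
    rw [euler] at h
    by_contra hno
    push_neg at hno
    have hterm : ∀ i ∈ univ, x i * tcontr A x i ≤ 0 := by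
      intro i _
      rcases eq_or_lt_of_le (hx i) with h0 | h0
      · rw [← h0]; simp
      · exact mul_nonpos_iff.mpr (Or.inl ⟨h0.le, hno i h0⟩)
    linarith [Finset.sum_nonpos hterm]
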